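/- Let x, z ∈ L be elements such that [z, y] = (ad x)^p (y) for all y ∈ L, where ad x = [x, ·] and the p-th power is composition of K-linear endomorphisms. Then the element ι(x)^p − ι(z) of the universal enveloping algebra U(L) is central: it commutes with every element of U(L). -/

import Mathlib

/-- Let `K` be a field of characteristic `p > 0`, `L` a Lie
algebra over `K`, and `x z : L` such that `⁅z, y⁆ = (ad x)^p y` for all `y ∈ L`.
Then the element `ι(x)^p - ι(z)` of the universal enveloping algebra `U(L)` is
central: it commutes with every element of `U(L)`. -/
theorem stmt_15 {K L : Type*} (p : ℕ) [Field K] [CharP K p] [NeZero p]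
    [LieRing L] [LieAlgebra K L] (x z : L)
    (h : ∀ y : L, ⁅z, y⁆ = ((LieAlgebra.ad K L x) ^ p) y) :
    ∀ u : UniversalEnvelopingAlgebra K L,
      (UniversalEnvelopingAlgebra.ι K x ^ p - UniversalEnvelopingAlgebra.ι K z) * u
        = u * (UniversalEnvelopingAlgebra.ι K x ^ p - UniversalEnvelopingAlgebra.ι K z) := by
  have hp : Fact p.Prime := ⟨(CharP.char_is_prime_or_zero K p).resolve_right (NeZero.ne p)⟩
  set U := UniversalEnvelopingAlgebra K L
  set a : U := UniversalEnvelopingAlgebra.ι K x with ha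
  -- U is nontrivial (it maps onto K via the trivial representation)
  have hU : Nontrivial U :=
    letI : LieRing K := LieRing.ofAssociativeRing
    letI : LieAlgebra K K := LieAlgebra.ofAssociativeAlgebra
    (UniversalEnvelopingAlgebra.lift K (0 : L →ₗ⁅K⁆ K)).toRingHom.domain_nontrivial
  -- ι turns brackets into ring commutators
  have hb : ∀ w y : L, UniversalEnvelopingAlgebra.ι K ⁅w, y⁆
      = UniversalEnvelopingAlgebra.ι K w * UniversalEnvelopingAlgebra.ι K y
        - UniversalEnvelopingAlgebra.ι K y * UniversalEnvelopingAlgebra.ι K w := by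
    intro w y
    letI : LieRing U := LieRing.ofAssociativeRing
    rw [LieHom.map_lie, LieRing.of_associative_ring_bracket]
  -- left and right multiplication operators
  set Lm : Module.End K U := LinearMap.mulLeft K a with hLm
  set Rm : Module.End K U := LinearMap.mulRight K a with hRm
  have hcomm : Commute Lm Rm := by
    ext u
    simp [hLm, hRm, mul_assoc]
  have hchar : CharP (Module.End K U) p := charP_of_injective_algebraMap
    (algebraMap K (Module.End K U)).injective p
  have key : (Lm - Rm) ^ p = LinearMap.mulLeft K (a ^ p) - LinearMap.mulRight K (a ^ p) := by
    rw [sub_pow_char_of_commute _ hcomm, hLm, hRm, LinearMap.pow_mulLeft,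
      LinearMap.pow_mulRight]
  -- (Lm - Rm)^n on ι y equals ι ((ad x)^n y)
  have step : ∀ y : L, (Lm - Rm) (UniversalEnvelopingAlgebra.ι K y)
      = UniversalEnvelopingAlgebra.ι K (LieAlgebra.ad K L x y) := by
    intro y
    simp only [LinearMap.sub_apply, hLm, hRm, LinearMap.mulLeft_apply,
      LinearMap.mulRight_apply, LieAlgebra.ad_apply, hb, ha]
  have iter : ∀ (n : ℕ) (y : L),
      ((Lm - Rm) ^ n) (UniversalEnvelopingAlgebra.ι K y)
        = UniversalEnvelopingAlgebra.ι K (((LieAlgebra.ad K L x) ^ n) y) := by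
    intro n
    induction n with
    | zero => intro y; simp
    | succ n ih =>
      intro y
      rw [pow_succ, Module.End.mul_apply, step, ih, ← Module.End.mul_apply, ← pow_succ]
  -- the element commutes with each ι y
  have base : ∀ y : L, Commute (a ^ p - UniversalEnvelopingAlgebra.ι K z)
      (UniversalEnvelopingAlgebra.ι K y) := by
    intro y
    have h1 := iter p y
    rw [key] at h1
    simp only [LinearMap.sub_apply, LinearMap.mulLeft_apply, LinearMap.mulRight_apply] at h1
    have h2 : UniversalEnvelopingAlgebra.ι K z * UniversalEnvelopingAlgebra.ι K y
        - UniversalEnvelopingAlgebra.ι K y * UniversalEnvelopingAlgebra.ι K z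
        = UniversalEnvelopingAlgebra.ι K (((LieAlgebra.ad K L x) ^ p) y) := by
      rw [← hb, h y]
    show (a ^ p - UniversalEnvelopingAlgebra.ι K z) * UniversalEnvelopingAlgebra.ι K y
        = UniversalEnvelopingAlgebra.ι K y * (a ^ p - UniversalEnvelopingAlgebra.ι K z)
    rw [sub_mul, mul_sub, sub_eq_sub_iff_sub_eq_sub]
    exact h1.trans h2.symm
  intro u
  obtain ⟨t, rfl⟩ := (show Function.Surjective (UniversalEnvelopingAlgebra.mkAlgHom K L) from
    RingCon.mkₐ_surjective (α := K) _) u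
  induction t using TensorAlgebra.induction with
  | algebraMap r => rw [AlgHom.commutes]; exact (Algebra.commutes r _).symm
  | ι y =>
      have : (UniversalEnvelopingAlgebra.mkAlgHom K L) (TensorAlgebra.ι K y)
          = UniversalEnvelopingAlgebra.ι K y := rfl
      rw [this]
      exact base y
  | mul s t hs ht => rw [map_mul]; exact Commute.mul_right hs ht
  | add s t hs ht => rw [map_add]; exact Commute.add_right hs ht
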